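/- arXiv:2111.13054 — 10 statements merged into one kernel-verified Lean document; each statement's English description precedes it below -/
import Mathlib

section
/- For every finite connected simple graph G, the strong metric dimension of G equals the minimum size of a vertex cover of the strong resolving graph of G, i.e., smd(G) = τ(G_SR). -/
/-- Vertex `u` is maximally distant to `v`: no neighbour of `u` is farther from `v`. -/
def MaxDistTo {V : Type*} (G : SimpleGraph V) (u v : V) : Prop :=
  ∀ u', G.Adj u u' → G.dist u' v ≤ G.dist u v

/-- Vertices `u` and `v` are mutually maximally distant in `G`. -/
def MutuallyMaxDist {V : Type*} (G : SimpleGraph V) (u v : V) : Prop :=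
  MaxDistTo G u v ∧ MaxDistTo G v u

/-- The strong resolving graph of `G`. -/
def strongResolvingGraph {V : Type*} (G : SimpleGraph V) : SimpleGraph V where
  Adj u v := u ≠ v ∧ MutuallyMaxDist G u v
  symm := by
    constructor
    rintro u v ⟨h1, h2, h3⟩
    exact ⟨h1.symm, h3, h2⟩
  loopless := by
    constructor
    rintro u ⟨h, -⟩
    exact h rfl

/-- `w` strongly resolves the pair `u, v`. -/
def StronglyResolves {V : Type*} (G : SimpleGraph V) (w u v : V) : Prop :=
  G.dist w u = G.dist w v + G.dist v u ∨ G.dist w v = G.dist w u + G.dist u v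

/-- `R` is a strong resolving set for `G`. -/
def IsStrongResolvingSet {V : Type*} (G : SimpleGraph V) (R : Set V) : Prop :=
  ∀ u v : V, u ≠ v → ∃ w ∈ R, StronglyResolves G w u v

/-- The strong metric dimension of `G`. -/
noncomputable def smd {V : Type*} [Fintype V] (G : SimpleGraph V) : ℕ :=
  sInf {n | ∃ R : Finset V, IsStrongResolvingSet G ↑R ∧ R.card = n}

/-- `C` is a vertex cover of `H`. -/
def IsVertexCover {V : Type*} (H : SimpleGraph V) (C : Set V) : Prop :=
  ∀ a b : V, H.Adj a b → a ∈ C ∨ b ∈ C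

/-- The minimum size of a vertex cover of `H`. -/
noncomputable def tau {V : Type*} [Fintype V] (H : SimpleGraph V) : ℕ :=
  sInf {n | ∃ C : Finset V, IsVertexCover H ↑C ∧ C.card = n}

/-- Distinct vertices are twins if they have the same neighbours apart from each other. -/
def Twins {V : Type*} (G : SimpleGraph V) (u v : V) : Prop :=
  G.neighborSet u \ {v} = G.neighborSet v \ {u}

/-- True twins: adjacent twins (equivalently, equal closed neighbourhoods). -/
def TrueTwins {V : Type*} (G : SimpleGraph V) (u v : V) : Prop :=
  Twins G u v ∧ G.Adj u v

/-- False twins: non-adjacent twins (equivalently, equal open neighbourhoods). -/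
def FalseTwins {V : Type*} (G : SimpleGraph V) (u v : V) : Prop :=
  Twins G u v ∧ ¬ G.Adj u v

/-- `G` contains an induced path on four vertices. -/
def HasInducedP4 {V : Type*} (G : SimpleGraph V) : Prop :=
  ∃ a b c d : V, a ≠ c ∧ a ≠ d ∧ b ≠ d ∧
    G.Adj a b ∧ G.Adj b c ∧ G.Adj c d ∧ ¬ G.Adj a c ∧ ¬ G.Adj a d ∧ ¬ G.Adj b d

section Aux

open SimpleGraph

variable {V : Type*}

private lemma adj_dist_le' {G : SimpleGraph V} (hG : G.Connected) {a b : V}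
    (h : G.Adj a b) (c : V) : G.dist a c ≤ G.dist b c + 1 := by
  have t : G.dist a c ≤ G.dist a b + G.dist b c := hG.dist_triangle
  have h1 : G.dist a b ≤ 1 := by
    simpa using G.dist_le h.toWalk
  omega

/-- Key chain lemma: starting from `u`, walk away from `v` until maximally distant. -/
private lemma exists_mdt [Fintype V] {G : SimpleGraph V} (hG : G.Connected) (v : V) :
    ∀ (k : ℕ) (u : V), (Finset.univ.sup fun x => G.dist x v) + 1 - G.dist u v ≤ k →
    ∃ w : V, MaxDistTo G w v ∧ G.dist w v = G.dist w u + G.dist u v ∧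
      (MaxDistTo G v u → MaxDistTo G v w) := by
  intro k
  induction k with
  | zero =>
    intro u hu
    exfalso
    have : G.dist u v ≤ Finset.univ.sup fun x => G.dist x v :=
      Finset.le_sup (f := fun x => G.dist x v) (Finset.mem_univ u)
    omega
  | succ k ih =>
    intro u hu
    by_cases h : MaxDistTo G u v
    · exact ⟨u, h, by simp [SimpleGraph.dist_self], fun h' => h'⟩
    · simp only [MaxDistTo, not_forall] at h
      obtain ⟨u', hadj, hgt⟩ := h
      push_neg at hgt
      have h1 : G.dist u' v ≤ G.dist u v + 1 := adj_dist_le' hG hadj.symm v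
      have heq : G.dist u' v = G.dist u v + 1 := by omega
      have hsup : G.dist u' v ≤ Finset.univ.sup fun x => G.dist x v :=
        Finset.le_sup (f := fun x => G.dist x v) (Finset.mem_univ u')
      obtain ⟨w, hw1, hw2, hw3⟩ := ih u' (by omega)
      refine ⟨w, hw1, ?_, ?_⟩
      · have t1 : G.dist w v ≤ G.dist w u + G.dist u v := hG.dist_triangle
        have t2 : G.dist w u ≤ G.dist w u' + G.dist u' u := hG.dist_triangle
        have t3 : G.dist u' u ≤ 1 := by
          simpa using G.dist_le (hadj.symm.toWalk)
        omega
      · intro hv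
        apply hw3
        intro v'' hadj''
        have a1 : G.dist v'' u' ≤ G.dist v'' u + 1 := by
          have t : G.dist v'' u' ≤ G.dist v'' u + G.dist u u' := hG.dist_triangle
          have : G.dist u u' ≤ 1 := by simpa using G.dist_le hadj.toWalk
          omega
        have a2 : G.dist v'' u ≤ G.dist v u := hv v'' hadj''
        have a3 : G.dist v u' = G.dist u' v := SimpleGraph.dist_comm
        have a4 : G.dist v u = G.dist u v := SimpleGraph.dist_comm
        omega

private lemma srs_iff_vc [Fintype V] {G : SimpleGraph V} (hG : G.Connected) (R : Set V) :
    IsStrongResolvingSet G R ↔ _root_.IsVertexCover (strongResolvingGraph G) R := by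
  constructor
  · intro hR a b hab
    obtain ⟨hne, hba', hab'⟩ := hab
    obtain ⟨w, hwR, hw⟩ := hR a b hne
    -- claim: w = a or w = b
    rcases hw with hcase | hcase
    · -- d(w,a) = d(w,b) + d(b,a); claim w = b
      right
      suffices hwb : w = b by rwa [hwb] at hwR
      by_contra hwb
      have hd0 : G.dist b w ≠ 0 :=
        fun h0 => hwb ((hG.dist_eq_zero_iff).mp h0).symm
      obtain ⟨p, hp⟩ := SimpleGraph.exists_walk_of_dist_ne_zero hd0
      cases p with
      | nil => simp [SimpleGraph.dist_self] at hd0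
      | @cons _ x _ hbx q =>
        simp only [SimpleGraph.Walk.length_cons] at hp
        have hq : G.dist x w ≤ q.length := SimpleGraph.dist_le q
        have tri : G.dist w a ≤ G.dist w x + G.dist x a := hG.dist_triangle
        have hx : G.dist x a ≤ G.dist b a := hab' x hbx
        have c1 : G.dist w x = G.dist x w := SimpleGraph.dist_comm
        have c2 : G.dist w b = G.dist b w := SimpleGraph.dist_comm
        omega
    · -- d(w,b) = d(w,a) + d(a,b); claim w = a
      left
      suffices hwa : w = a by rwa [hwa] at hwR
      by_contra hwa
      have hd0 : G.dist a w ≠ 0 :=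
        fun h0 => hwa ((hG.dist_eq_zero_iff).mp h0).symm
      obtain ⟨p, hp⟩ := SimpleGraph.exists_walk_of_dist_ne_zero hd0
      cases p with
      | nil => simp [SimpleGraph.dist_self] at hd0
      | @cons _ x _ hax q =>
        simp only [SimpleGraph.Walk.length_cons] at hp
        have hq : G.dist x w ≤ q.length := SimpleGraph.dist_le q
        have tri : G.dist w b ≤ G.dist w x + G.dist x b := hG.dist_triangle
        have hx : G.dist x b ≤ G.dist a b := hba' x hax
        have c1 : G.dist w x = G.dist x w := SimpleGraph.dist_comm
        have c2 : G.dist w a = G.dist a w := SimpleGraph.dist_comm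
        omega
  · intro hC u v huv
    -- build u* maximally distant to v
    obtain ⟨us, h1, h2, -⟩ := exists_mdt hG v
      ((Finset.univ.sup fun x => G.dist x v) + 1) u (Nat.sub_le _ _)
    -- build v* maximally distant to u*, starting from v
    obtain ⟨vs, h3, h4, h5⟩ := exists_mdt hG us
      ((Finset.univ.sup fun x => G.dist x us) + 1) v (Nat.sub_le _ _)
    have h6 : MaxDistTo G us vs := h5 h1
    have hne : us ≠ vs := by
      intro h
      have hz : G.dist vs us = 0 := by rw [← h]; exact SimpleGraph.dist_self
      have hv2 : G.dist v us = 0 := by omega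
      have hvu : v = us := (hG.dist_eq_zero_iff).mp hv2
      have hz2 : G.dist us v = 0 := by rw [hvu]; exact SimpleGraph.dist_self
      have huv0 : G.dist u v = 0 := by omega
      exact huv ((hG.dist_eq_zero_iff).mp huv0)
    have hadj : (strongResolvingGraph G).Adj us vs := ⟨hne, h6, h3⟩
    rcases hC us vs hadj with hmem | hmem
    · exact ⟨us, hmem, Or.inr h2⟩
    · refine ⟨vs, hmem, Or.inl ?_⟩
      -- d(vs,u) = d(vs,v) + d(v,u)
      have t1 : G.dist vs us ≤ G.dist vs u + G.dist u us := hG.dist_triangle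
      have t2 : G.dist vs u ≤ G.dist vs v + G.dist v u := hG.dist_triangle
      have c1 : G.dist v us = G.dist us v := SimpleGraph.dist_comm
      have c2 : G.dist u us = G.dist us u := SimpleGraph.dist_comm
      have c3 : G.dist v u = G.dist u v := SimpleGraph.dist_comm
      omega

end Aux

/-- For every finite connected simple graph `G`,
`smd(G) = τ(G_SR)`. -/
theorem smd_eq_tau_strongResolvingGraph {V : Type*} [Fintype V]
    (G : SimpleGraph V) (hG : G.Connected) :
    smd G = tau (strongResolvingGraph G) := by
  unfold smd tau
  congr 1
  ext n
  constructor
  · rintro ⟨R, hR, rfl⟩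
    exact ⟨R, (srs_iff_vc hG _).mp hR, rfl⟩
  · rintro ⟨C, hC, rfl⟩
    exact ⟨C, (srs_iff_vc hG _).mpr hC, rfl⟩
end

section
/- Let G be a finite connected simple graph and u,v distinct twins in G. Then u and v are true twins in the strong resolving graph G_SR: they are adjacent in G_SR and have the same closed neighbourhood in G_SR. -/
lemma twins_adj_aux {V : Type*} {G : SimpleGraph V} {u v : V} (h : Twins G u v)
    {w : V} (hwv : w ≠ v) (hadj : G.Adj u w) : G.Adj v w := by
  have hm : w ∈ G.neighborSet u \ {v} := ⟨hadj, hwv⟩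
  rw [h] at hm
  exact hm.1

lemma twins_dist_le_aux {V : Type*} {G : SimpleGraph V} (hG : G.Connected) {u v : V}
    (h : Twins G u v) {w : V} (hwv : w ≠ v) :
    G.dist u w ≤ G.dist v w := by
  obtain ⟨p, hp⟩ := hG.exists_walk_length_eq_dist v w
  cases p with
  | nil => exact absurd rfl hwv.symm
  | cons hadj q =>
    rename_i z
    simp only [SimpleGraph.Walk.length_cons] at hp
    by_cases hz : z = u
    · subst hz
      have := SimpleGraph.dist_le q
      omega
    · have huz : G.Adj u z := twins_adj_aux h.symm hz hadj
      have := SimpleGraph.dist_le (SimpleGraph.Walk.cons huz q)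
      simp only [SimpleGraph.Walk.length_cons] at this
      omega

lemma twins_dist_eq_aux {V : Type*} {G : SimpleGraph V} (hG : G.Connected) {u v : V}
    (h : Twins G u v) {w : V} (hwu : w ≠ u) (hwv : w ≠ v) :
    G.dist u w = G.dist v w :=
  le_antisymm (twins_dist_le_aux hG h hwv) (twins_dist_le_aux hG h.symm hwu)

/-- distinct twins of a connected graph `G` are true twins of
`G_SR`: adjacent in `G_SR` with equal closed neighbourhoods there. -/
theorem twins_trueTwins_strongResolvingGraph {V : Type*} [Fintype V]
    (G : SimpleGraph V) (hG : G.Connected) (u v : V) (huv : u ≠ v)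
    (h : Twins G u v) :
    (strongResolvingGraph G).Adj u v ∧
      insert u ((strongResolvingGraph G).neighborSet u) =
        insert v ((strongResolvingGraph G).neighborSet v) := by
  -- u and v are MMD
  have key : ∀ x y : V, Twins G x y → x ≠ y → MaxDistTo G x y := by
    intro x y hxy hne x' hadj
    by_cases hx' : x' = y
    · subst hx'
      simp [SimpleGraph.dist_self]
    · have : G.Adj y x' := twins_adj_aux hxy hx' hadj
      have h1 : G.dist x' y = 1 := by
        rw [SimpleGraph.dist_comm, SimpleGraph.dist_eq_one_iff_adj]; exact this
      have h2 : 0 < G.dist x y := hG.pos_dist_of_ne hne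
      omega
  have hadjSR : (strongResolvingGraph G).Adj u v :=
    ⟨huv, key u v h huv, key v u h.symm huv.symm⟩
  refine ⟨hadjSR, ?_⟩
  -- generic one-direction lemma for the set equality
  have main : ∀ x y : V, Twins G x y → x ≠ y → ∀ w,
      (strongResolvingGraph G).Adj x w → w ≠ y → (strongResolvingGraph G).Adj y w := by
    intro x y hxy hne w hw hwy
    obtain ⟨hwx, hmdx, hmdw⟩ := hw
    have hwx' : w ≠ x := fun e => hwx e.symm
    have hdxy : G.dist x w = G.dist y w := twins_dist_eq_aux hG hxy hwx' hwy
    refine ⟨fun e => hwy e.symm, ?_, ?_⟩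
    · -- MaxDistTo y w
      intro y' hady
      by_cases hy' : y' = x
      · subst hy'
        omega
      · have : G.Adj x y' := twins_adj_aux hxy.symm hy' hady
        have := hmdx y' this
        omega
    · -- MaxDistTo w y
      intro w' hadw
      by_cases hw1 : w' = y
      · subst hw1; simp [SimpleGraph.dist_self]
      by_cases hw2 : w' = x
      · rw [hw2]
        rw [hw2] at hadw
        -- w is adjacent to x, hence to y; need dist x y ≤ dist w y
        have hwadjy : G.Adj y w := twins_adj_aux hxy hwy hadw.symm
        have hxy1 : G.dist x y ≤ 1 := by
          by_contra hc
          have := hmdw y hwadjy.symm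
          have hwx1 : G.dist w x = 1 := by
            rw [SimpleGraph.dist_eq_one_iff_adj]; exact hadw
          have e : G.dist x y = G.dist y x := SimpleGraph.dist_comm
          omega
        have hw1' : G.dist w y = 1 := by
          rw [SimpleGraph.dist_eq_one_iff_adj]; exact hwadjy.symm
        omega
      · have hd : G.dist x w' = G.dist y w' := twins_dist_eq_aux hG hxy hw2 hw1
        have h1 := hmdw w' hadw
        have e1 : G.dist x w' = G.dist w' x := SimpleGraph.dist_comm
        have e2 : G.dist y w' = G.dist w' y := SimpleGraph.dist_comm
        have e3 : G.dist x w = G.dist w x := SimpleGraph.dist_comm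
        have e4 : G.dist y w = G.dist w y := SimpleGraph.dist_comm
        omega
  ext w
  simp only [Set.mem_insert_iff, SimpleGraph.mem_neighborSet]
  constructor
  · rintro (rfl | hw)
    · exact Or.inr hadjSR.symm
    · by_cases hwv : w = v
      · exact Or.inl hwv
      · exact Or.inr (main u v h huv w hw hwv)
  · rintro (rfl | hw)
    · exact Or.inr hadjSR
    · by_cases hwu : w = u
      · exact Or.inl hwu
      · exact Or.inr (main v u h.symm huv.symm w hw hwu)
end

section
/- Let G be a finite connected simple graph in which every pair of vertices is at distance at most 2. Then for all distinct vertices u,v, {u,v} is an edge of the strong resolving graph G_SR if and only if {u,v} is a non-edge of G (i.e., an edge of the complement of G) or u and v are true twins in G. In other words, E(G_SR) = E(complement of G) ∪ {pairs of true twins of G}. -/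
/-- if `G` is connected of diameter at most 2, then the edges of
`G_SR` are exactly the non-edges of `G` together with the true-twin pairs. -/
theorem strongResolvingGraph_eq_compl_union_trueTwins {V : Type*} [Fintype V]
    (G : SimpleGraph V) (hG : G.Connected) (hdiam : ∀ x y : V, G.dist x y ≤ 2) :
    ∀ u v : V, u ≠ v →
      ((strongResolvingGraph G).Adj u v ↔ Gᶜ.Adj u v ∨ TrueTwins G u v) := by
  intro u v huv
  constructor
  · rintro ⟨-, hmu, hmv⟩
    by_cases hadj : G.Adj u v
    · right
      refine ⟨?_, hadj⟩
      have key : ∀ a b : V, G.Adj a b → MaxDistTo G a b →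
          G.neighborSet a \ {b} ⊆ G.neighborSet b \ {a} := by
        intro a b hab hmax x hx
        obtain ⟨hx1, hx2⟩ := hx
        simp only [SimpleGraph.mem_neighborSet] at hx1
        have hd : G.dist x b ≤ G.dist a b := hmax x hx1
        rw [SimpleGraph.dist_eq_one_iff_adj.mpr hab] at hd
        have hxb : x ≠ b := by simpa using hx2
        have hpos : 0 < G.dist x b := hG.pos_dist_of_ne hxb
        have hxbadj : G.Adj x b :=
          SimpleGraph.dist_eq_one_iff_adj.mp (le_antisymm hd hpos)
        refine ⟨hxbadj.symm, ?_⟩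
        simp only [Set.mem_singleton_iff]
        intro h; subst h; exact G.loopless.irrefl x hx1.symm
      exact Set.Subset.antisymm (key u v hadj hmu) (key v u hadj.symm hmv)
    · left; exact ⟨huv, hadj⟩
  · rintro (⟨-, hnadj⟩ | ⟨htw, hadj⟩)
    · have hd2 : G.dist u v = 2 := by
        have h1 : G.dist u v ≠ 1 := fun h => hnadj (SimpleGraph.dist_eq_one_iff_adj.mp h)
        have h0 : 0 < G.dist u v := hG.pos_dist_of_ne huv
        have h2 := hdiam u v
        omega
      refine ⟨huv, ?_, ?_⟩
      · intro u' _; rw [hd2]; exact hdiam u' v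
      · intro v' _
        have h : G.dist v u = 2 := by rw [SimpleGraph.dist_comm]; exact hd2
        rw [h]; exact hdiam v' u
    · have hmax : ∀ a b : V, G.Adj a b →
          G.neighborSet a \ {b} = G.neighborSet b \ {a} → MaxDistTo G a b := by
        intro a b hab htw x hx
        rw [SimpleGraph.dist_eq_one_iff_adj.mpr hab]
        by_cases hxb : x = b
        · subst hxb; simp [SimpleGraph.dist_self]
        · have : x ∈ G.neighborSet a \ {b} := ⟨hx, by simpa using hxb⟩
          rw [htw] at this
          exact le_of_eq (SimpleGraph.dist_eq_one_iff_adj.mpr this.1.symm)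
      refine ⟨huv, hmax u v hadj htw, hmax v u hadj.symm ?_⟩
      exact htw.symm
end

section
/- If G is a finite connected cograph, then its strong resolving graph G_SR is a cograph, i.e., G_SR contains no induced path on four vertices. -/
set_option linter.unusedSectionVars false

section myAux

variable {V : Type*} [Fintype V] {G : SimpleGraph V}

/-- diameter ≤ 2 for connected P4-free graphs -/
lemma myDiamLeTwo (hG : G.Connected) (hP4 : ¬ HasInducedP4 G)
    (u v : V) : G.dist u v ≤ 2 := by
  by_contra h
  push_neg at h
  obtain ⟨w, hw⟩ := hG.exists_walk_length_eq_dist u v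
  have hlen : 3 ≤ w.length := by omega
  match w, hw, hlen with
  | SimpleGraph.Walk.cons (v := b) h1 (SimpleGraph.Walk.cons (v := c) h2
      (SimpleGraph.Walk.cons (v := d) h3 w')), hw, hlen =>
    simp only [SimpleGraph.Walk.length_cons] at hw hlen
    apply hP4
    have key : ∀ (p : G.Walk u v), ¬ (p.length < G.dist u v) := fun p hp =>
      absurd (G.dist_le p) (by omega)
    refine ⟨u, b, c, d, ?_, ?_, ?_, h1, h2, h3, ?_, ?_, ?_⟩
    · rintro rfl
      exact key (SimpleGraph.Walk.cons h3 w') (by simp; omega)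
    · rintro rfl
      exact key w' (by omega)
    · rintro rfl
      exact key (SimpleGraph.Walk.cons h1 w') (by simp; omega)
    · intro hac
      exact key (SimpleGraph.Walk.cons hac (SimpleGraph.Walk.cons h3 w')) (by simp; omega)
    · intro had
      exact key (SimpleGraph.Walk.cons had w') (by simp; omega)
    · intro hbd
      exact key (SimpleGraph.Walk.cons h1 (SimpleGraph.Walk.cons hbd w')) (by simp; omega)

/-- an SR-edge which is also a G-edge gives true twins -/
lemma myAdjTwins (hG : G.Connected) {x y : V}
    (hS : (strongResolvingGraph G).Adj x y) (hA : G.Adj x y) : Twins G x y := by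
  obtain ⟨hne, hx, hy⟩ := hS
  have hd : G.dist x y = 1 := SimpleGraph.dist_eq_one_iff_adj.mpr hA
  have hd' : G.dist y x = 1 := SimpleGraph.dist_eq_one_iff_adj.mpr hA.symm
  ext z
  simp only [Set.mem_diff, SimpleGraph.mem_neighborSet, Set.mem_singleton_iff]
  constructor
  · rintro ⟨hz, hzy⟩
    have h1 := hx z hz
    rw [hd] at h1
    have hzy' : G.dist z y = 1 := by
      rcases Nat.le_one_iff_eq_zero_or_eq_one.mp h1 with h0 | h0
      · exact absurd ((hG.dist_eq_zero_iff).mp h0) hzy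
      · exact h0
    exact ⟨(SimpleGraph.dist_eq_one_iff_adj.mp hzy').symm, hz.ne'⟩
  · rintro ⟨hz, hzx⟩
    have h1 := hy z hz
    rw [hd'] at h1
    have hzx' : G.dist z x = 1 := by
      rcases Nat.le_one_iff_eq_zero_or_eq_one.mp h1 with h0 | h0
      · exact absurd ((hG.dist_eq_zero_iff).mp h0) hzx
      · exact h0
    exact ⟨(SimpleGraph.dist_eq_one_iff_adj.mp hzx').symm, hz.ne'⟩

/-- distinct non-adjacent vertices are SR-adjacent (diam ≤ 2) -/
lemma myNonAdjSR (hG : G.Connected) (hP4 : ¬ HasInducedP4 G) {x y : V}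
    (hne : x ≠ y) (hA : ¬ G.Adj x y) : (strongResolvingGraph G).Adj x y := by
  refine ⟨hne, ?_, ?_⟩
  · intro x' hx'
    have h2 : G.dist x' y ≤ 2 := myDiamLeTwo hG hP4 x' y
    have hpos : 0 < G.dist x y := hG.pos_dist_of_ne hne
    have hno : G.dist x y ≠ 1 := fun h => hA (SimpleGraph.dist_eq_one_iff_adj.mp h)
    omega
  · intro y' hy'
    have h2 : G.dist y' x ≤ 2 := myDiamLeTwo hG hP4 y' x
    have hpos : 0 < G.dist y x := hG.pos_dist_of_ne hne.symm
    have hno : G.dist y x ≠ 1 := fun h => hA (SimpleGraph.dist_eq_one_iff_adj.mp h).symm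
    omega

/-- twin propagation -/
lemma myTwinProp {x y z : V} (ht : Twins G x y) (hyz : G.Adj y z) (hzx : z ≠ x) :
    G.Adj x z := by
  have : z ∈ G.neighborSet y \ {x} := ⟨hyz, hzx⟩
  rw [← ht] at this
  exact this.1

lemma myTwinsSymm {x y : V} (ht : Twins G x y) : Twins G y x := ht.symm

/-- true twins are SR-adjacent -/
lemma myTrueTwinsSR (hG : G.Connected) {x y : V} (ht : Twins G x y) (hA : G.Adj x y) :
    (strongResolvingGraph G).Adj x y := by
  have hd : G.dist x y = 1 := SimpleGraph.dist_eq_one_iff_adj.mpr hA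
  have hd' : G.dist y x = 1 := SimpleGraph.dist_eq_one_iff_adj.mpr hA.symm
  refine ⟨hA.ne, ?_, ?_⟩
  · intro x' hx'
    rw [hd]
    by_cases hxy : x' = y
    · subst hxy; rw [hG.dist_eq_zero_iff.mpr rfl]; omega
    · have : x' ∈ G.neighborSet x \ {y} := ⟨hx', hxy⟩
      rw [ht] at this
      rw [SimpleGraph.dist_eq_one_iff_adj.mpr this.1.symm]
  · intro y' hy'
    rw [hd']
    by_cases hyx : y' = x
    · subst hyx; rw [hG.dist_eq_zero_iff.mpr rfl]; omega
    · have : y' ∈ G.neighborSet y \ {x} := ⟨hy', hyx⟩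
      rw [← ht] at this
      rw [SimpleGraph.dist_eq_one_iff_adj.mpr this.1.symm]

/-- twins compose through a common adjacent middle vertex -/
lemma myTwinsTrans {x y z : V} (hxy : Twins G x y) (hyz : Twins G y z)
    (haxy : G.Adj x y) (hayz : G.Adj y z) (hxz : x ≠ z) : Twins G x z := by
  ext w
  simp only [Set.mem_diff, SimpleGraph.mem_neighborSet, Set.mem_singleton_iff]
  constructor
  · rintro ⟨hw, hwz⟩
    by_cases hwy : w = y
    · subst hwy; exact ⟨hayz.symm, haxy.ne'⟩
    · have h1 : w ∈ G.neighborSet x \ {y} := ⟨hw, hwy⟩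
      rw [hxy] at h1
      have h2 : w ∈ G.neighborSet y \ {z} := ⟨h1.1, hwz⟩
      rw [hyz] at h2
      exact ⟨h2.1, h1.2⟩
  · rintro ⟨hw, hwx⟩
    by_cases hwy : w = y
    · subst hwy; exact ⟨haxy, hayz.ne⟩
    · have h1 : w ∈ G.neighborSet z \ {y} := ⟨hw, hwy⟩
      rw [← hyz] at h1
      have h2 : w ∈ G.neighborSet y \ {x} := ⟨h1.1, hwx⟩
      rw [← hxy] at h2
      exact ⟨h2.1, h1.2⟩

end myAux

/-- the strong resolving graph of a finite connected cograph
is a cograph. -/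
theorem strongResolvingGraph_cograph {V : Type*} [Fintype V]
    (G : SimpleGraph V) (hG : G.Connected) (hP4 : ¬ HasInducedP4 G) :
    ¬ HasInducedP4 (strongResolvingGraph G) := by
  rintro ⟨a, b, c, d, hac, had, hbd, hab, hbc, hcd, nac, nad, nbd⟩
  have hSab := hab; have hSbc := hbc; have hScd := hcd
  -- G-adjacency from SR non-edges
  have gac : G.Adj a c := by
    by_contra hn; exact nac (myNonAdjSR hG hP4 hac hn)
  have gad : G.Adj a d := by
    by_contra hn; exact nad (myNonAdjSR hG hP4 had hn)
  have gbd : G.Adj b d := by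
    by_contra hn; exact nbd (myNonAdjSR hG hP4 hbd hn)
  have hnab : a ≠ b := hSab.1
  have hnbc : b ≠ c := hSbc.1
  have hncd : c ≠ d := hScd.1
  by_cases gbc : G.Adj b c
  · -- b,c are true twins
    have tbc : Twins G b c := myAdjTwins hG hSbc gbc
    have gab : G.Adj a b := (myTwinProp tbc gac.symm hnab).symm
    have tab : Twins G a b := myAdjTwins hG hSab gab
    have tac : Twins G a c := myTwinsTrans tab tbc gab gbc hac
    exact nac (myTrueTwinsSR hG tac gac)
  · by_cases gab : G.Adj a b
    · have tab : Twins G a b := myAdjTwins hG hSab gab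
      exact gbc (myTwinProp (myTwinsSymm tab) gac hnbc.symm)
    · by_cases gcd : G.Adj c d
      · have tcd : Twins G c d := myAdjTwins hG hScd gcd
        exact gbc (myTwinProp tcd gbd.symm hnbc).symm
      · exact hP4 ⟨b, d, a, c, hnab.symm, hnbc, fun h => hncd h.symm,
          gbd, gad.symm, gac, fun h => gab h.symm, gbc, fun h => gcd h.symm⟩
end

section
/- Let G be a finite connected simple graph and u,v true twins in G, and let G' = G \ v be the subgraph induced on V(G) \ {v}. Then the strong resolving graph of G' equals the subgraph of the strong resolving graph of G induced on V(G) \ {v}; that is, for all distinct w1,w2 ∈ V(G) \ {v}, w1 and w2 are mutually maximally distant in G' if and only if they are mutually maximally distant in G. -/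
section aux
variable {V : Type*} [DecidableEq V] {G : SimpleGraph V} {u v : V}

lemma twins_adj (h : TrueTwins G u v) {c : V} (hc : G.Adj v c) (hcu : c ≠ u) :
    G.Adj u c := by
  have h1 := h.1
  have hmem : c ∈ G.neighborSet v \ {u} := ⟨hc, hcu⟩
  rw [← h1] at hmem
  exact hmem.1

/-- map vertex, sending `v` to `u`. -/
def fv (huv : u ≠ v) (a : V) : ({x | x ≠ v} : Set V) :=
  if h : a = v then ⟨u, huv⟩ else ⟨a, h⟩

lemma fv_ne (huv : u ≠ v) {a : V} (ha : a ≠ v) : fv huv a = ⟨a, ha⟩ := dif_neg ha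

lemma fv_eq (huv : u ≠ v) : fv huv v = ⟨u, huv⟩ := dif_pos rfl

lemma exists_walk_fv (huv : u ≠ v) (h : TrueTwins G u v) {a b : V} (p : G.Walk a b) :
    ∃ q : (G.induce {x | x ≠ v}).Walk (fv huv a) (fv huv b), q.length ≤ p.length := by
  induction p with
  | nil => exact ⟨.nil, le_rfl⟩
  | @cons a c b hadj p ih =>
    obtain ⟨q, hq⟩ := ih
    by_cases hfc : fv huv a = fv huv c
    · exact ⟨q.copy hfc.symm rfl, by simpa using hq.trans (Nat.le_succ _)⟩
    · have hadj' : (G.induce {x | x ≠ v}).Adj (fv huv a) (fv huv c) := by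
        by_cases hav : a = v <;> by_cases hcv : c = v
        · exact absurd (hav.trans hcv.symm) hadj.ne
        · rw [hav] at hadj ⊢
          rw [fv_eq huv, fv_ne huv hcv]
          have hcu : c ≠ u := by
            intro hcu
            apply hfc
            rw [hav, hcu, fv_eq huv, fv_ne huv huv]
          exact twins_adj h hadj hcu
        · rw [hcv] at hadj ⊢
          rw [fv_eq huv, fv_ne huv hav]
          have hau : a ≠ u := by
            intro hau
            apply hfc
            rw [hcv, hau, fv_eq huv, fv_ne huv huv]
          exact (twins_adj h hadj.symm hau).symm
        · rw [fv_ne huv hav, fv_ne huv hcv]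
          exact hadj
      exact ⟨.cons hadj' q, by simpa using Nat.succ_le_succ hq⟩

/-- the inclusion hom from the induced subgraph. -/
def incl (s : Set V) : G.induce s →g G := ⟨Subtype.val, id⟩

lemma dist_induce_eq (hG : G.Connected) (huv : u ≠ v) (h : TrueTwins G u v)
    {a b : V} (ha : a ≠ v) (hb : b ≠ v) :
    (G.induce {x | x ≠ v}).dist ⟨a, ha⟩ ⟨b, hb⟩ = G.dist a b := by
  obtain ⟨p, hp⟩ := (hG a b).exists_walk_length_eq_dist
  obtain ⟨q, hq⟩ := exists_walk_fv huv h p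
  refine le_antisymm ?_ ?_
  · have h1 := SimpleGraph.dist_le (q.copy (fv_ne huv ha) (fv_ne huv hb))
    rw [SimpleGraph.Walk.length_copy] at h1
    exact h1.trans (hq.trans hp.le)
  · obtain ⟨r, hr⟩ :=
      ((q.copy (fv_ne huv ha) (fv_ne huv hb)).reachable).exists_walk_length_eq_dist
    have h2 := SimpleGraph.dist_le (r.map (incl {x | x ≠ v}))
    rw [SimpleGraph.Walk.length_map, hr] at h2
    exact h2

lemma dist_uv_eq (hG : G.Connected) (huv : u ≠ v) (h : TrueTwins G u v)
    {b : V} (hbu : b ≠ u) (hbv : b ≠ v) : G.dist u b = G.dist v b := by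
  have hsym : TrueTwins G v u := ⟨h.1.symm, h.2.symm⟩
  refine le_antisymm ?_ ?_
  · obtain ⟨p, hp⟩ := (hG v b).exists_walk_length_eq_dist
    obtain ⟨q, hq⟩ := exists_walk_fv huv h p
    have h2 := SimpleGraph.dist_le
      ((q.copy (fv_eq huv) (fv_ne huv hbv)).map (incl {x | x ≠ v}))
    rw [SimpleGraph.Walk.length_map, SimpleGraph.Walk.length_copy] at h2
    exact h2.trans (hq.trans hp.le)
  · obtain ⟨p, hp⟩ := (hG u b).exists_walk_length_eq_dist
    obtain ⟨q, hq⟩ := exists_walk_fv huv.symm hsym p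
    have h2 := SimpleGraph.dist_le
      ((q.copy (fv_eq huv.symm) (fv_ne huv.symm hbu)).map (incl {x | x ≠ u}))
    rw [SimpleGraph.Walk.length_map, SimpleGraph.Walk.length_copy] at h2
    exact h2.trans (hq.trans hp.le)

lemma maxDistTo_iff (hG : G.Connected) (huv : u ≠ v) (h : TrueTwins G u v)
    {a b : V} (ha : a ≠ v) (hb : b ≠ v) (hab : a ≠ b) :
    MaxDistTo (G.induce {x | x ≠ v}) ⟨a, ha⟩ ⟨b, hb⟩ ↔ MaxDistTo G a b := by
  constructor
  · intro H c hc
    by_cases hcv : c = v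
    · rw [hcv] at hc ⊢
      by_cases hbu : b = u
      · rw [hbu] at hab ⊢
        have h1 : G.dist v u = 1 := SimpleGraph.dist_eq_one_iff_adj.2 h.2.symm
        have h2 : G.dist a u = 1 :=
          SimpleGraph.dist_eq_one_iff_adj.2 ((twins_adj h hc.symm hab).symm)
        omega
      · have hvb : G.dist v b = G.dist u b := (dist_uv_eq hG huv h hbu hb).symm
        by_cases hau : a = u
        · rw [hau, ← hvb]
        · have hadj_au : G.Adj a u := (twins_adj h hc.symm hau).symm
          have : (G.induce {x | x ≠ v}).Adj ⟨a, ha⟩ ⟨u, huv⟩ := hadj_au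
          have h2 := H ⟨u, huv⟩ this
          rw [dist_induce_eq hG huv h, dist_induce_eq hG huv h] at h2
          rw [hvb]; exact h2
    · have : (G.induce {x | x ≠ v}).Adj ⟨a, ha⟩ ⟨c, hcv⟩ := hc
      have h2 := H ⟨c, hcv⟩ this
      rwa [dist_induce_eq hG huv h, dist_induce_eq hG huv h] at h2
  · intro H c hc
    obtain ⟨c, hcv⟩ := c
    have : G.Adj a c := hc
    have h2 := H c this
    rwa [dist_induce_eq hG huv h ha hb, dist_induce_eq hG huv h hcv hb]

end aux

/-- deleting one vertex of a true-twin pair, mutual maximal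
distance is preserved; hence the strong resolving graph of `G \ v` is the
induced subgraph of `G_SR` on `V(G) \ {v}`. -/
theorem strongResolvingGraph_deleteTrueTwin {V : Type*} [Fintype V] [DecidableEq V]
    (G : SimpleGraph V) (hG : G.Connected) (u v : V) (huv : u ≠ v)
    (h : TrueTwins G u v) :
    ∀ w1 w2 : ({x | x ≠ v} : Set V), w1 ≠ w2 →
      (MutuallyMaxDist (G.induce {x | x ≠ v}) w1 w2 ↔
        MutuallyMaxDist G (w1 : V) (w2 : V)) := by
  rintro ⟨a, ha⟩ ⟨b, hb⟩ hne
  have ha' : a ≠ v := ha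
  have hb' : b ≠ v := hb
  have hab : a ≠ b := fun e => hne (Subtype.ext e)
  constructor
  · rintro ⟨H1, H2⟩
    exact ⟨(maxDistTo_iff hG huv h ha' hb' hab).1 H1,
      (maxDistTo_iff hG huv h hb' ha' hab.symm).1 H2⟩
  · rintro ⟨H1, H2⟩
    exact ⟨(maxDistTo_iff hG huv h ha' hb' hab).2 H1,
      (maxDistTo_iff hG huv h hb' ha' hab.symm).2 H2⟩
end

section
/- Let G be a finite connected cograph on n vertices having no pair of true twins. Then smd(G) = n − ω(G), where ω(G) is the maximum size of a clique of G. -/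
section AuxLemmas
open SimpleGraph

lemma mydist_getVert_le {V : Type*} {G : SimpleGraph V} (hG : G.Connected) {u v : V}
    (p : G.Walk u v) (i : ℕ) : G.dist u (p.getVert i) ≤ i := by
  induction p generalizing i with
  | nil => simp [SimpleGraph.Walk.getVert_of_length_le, SimpleGraph.dist_self]
  | @cons a b c h q ih =>
    cases i with
    | zero => simp [SimpleGraph.dist_self]
    | succ i =>
      rw [SimpleGraph.Walk.getVert_cons_succ]
      calc G.dist a (q.getVert i) ≤ G.dist a b + G.dist b (q.getVert i) :=
            hG.dist_triangle
        _ ≤ 1 + i := by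
            have h1 : G.dist a b = 1 := SimpleGraph.dist_eq_one_iff_adj.mpr h
            have := ih i
            omega
        _ = i + 1 := by omega

lemma mydist_getVert_right_le {V : Type*} {G : SimpleGraph V} (hG : G.Connected) {u v : V}
    (p : G.Walk u v) (i : ℕ) : G.dist (p.getVert i) v ≤ p.length - i := by
  induction p generalizing i with
  | nil => simp [SimpleGraph.Walk.getVert_of_length_le, SimpleGraph.dist_self]
  | @cons a b c h q ih =>
    cases i with
    | zero =>
      simp only [SimpleGraph.Walk.getVert_zero, SimpleGraph.Walk.length_cons, Nat.sub_zero]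
      calc G.dist a c ≤ G.dist a b + G.dist b c := hG.dist_triangle
        _ ≤ 1 + q.length := by
            have h1 : G.dist a b = 1 := SimpleGraph.dist_eq_one_iff_adj.mpr h
            have := SimpleGraph.dist_le q
            omega
        _ = q.length + 1 := by omega
    | succ i =>
      rw [SimpleGraph.Walk.getVert_cons_succ]
      simpa using ih i

lemma mydist_getVert_eq {V : Type*} {G : SimpleGraph V} (hG : G.Connected) {u v : V}
    (p : G.Walk u v) (hp : p.length = G.dist u v) {i : ℕ} (hi : i ≤ p.length) :
    G.dist u (p.getVert i) = i := by
  have h1 := mydist_getVert_le hG p i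
  have h2 := mydist_getVert_right_le hG p i
  have h3 : G.dist u v ≤ G.dist u (p.getVert i) + G.dist (p.getVert i) v :=
    hG.dist_triangle
  omega

lemma mydiam_two {V : Type*} {G : SimpleGraph V} (hG : G.Connected)
    (hP4 : ¬ HasInducedP4 G) (u v : V) : G.dist u v ≤ 2 := by
  by_contra hlt
  push_neg at hlt
  obtain ⟨p, hp⟩ := hG.exists_walk_length_eq_dist u v
  have hlen : 3 ≤ p.length := by omega
  have d1 : G.dist u (p.getVert 1) = 1 := mydist_getVert_eq hG p hp (by omega)
  have d2 : G.dist u (p.getVert 2) = 2 := mydist_getVert_eq hG p hp (by omega)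
  have d3 : G.dist u (p.getVert 3) = 3 := mydist_getVert_eq hG p hp (by omega)
  have a01 : G.Adj u (p.getVert 1) := by
    have := p.adj_getVert_succ (i := 0) (by omega)
    rwa [p.getVert_zero] at this
  have a12 : G.Adj (p.getVert 1) (p.getVert 2) := p.adj_getVert_succ (by omega)
  have a23 : G.Adj (p.getVert 2) (p.getVert 3) := p.adj_getVert_succ (by omega)
  apply hP4
  refine ⟨u, p.getVert 1, p.getVert 2, p.getVert 3, ?_, ?_, ?_, a01, a12, a23, ?_, ?_, ?_⟩
  · intro h; rw [← h, SimpleGraph.dist_self] at d2; omega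
  · intro h; rw [← h, SimpleGraph.dist_self] at d3; omega
  · intro h; rw [← h, d1] at d3; omega
  · intro h; rw [SimpleGraph.dist_eq_one_iff_adj.mpr h] at d2; omega
  · intro h; rw [SimpleGraph.dist_eq_one_iff_adj.mpr h] at d3; omega
  · intro h
    have : G.dist u (p.getVert 3) ≤ G.dist u (p.getVert 1) + G.dist (p.getVert 1) (p.getVert 3) :=
      hG.dist_triangle
    rw [d1, d3, SimpleGraph.dist_eq_one_iff_adj.mpr h] at this
    omega

lemma mydist_two {V : Type*} {G : SimpleGraph V} (hG : G.Connected)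
    (hP4 : ¬ HasInducedP4 G) {u v : V} (hne : u ≠ v) (hadj : ¬ G.Adj u v) :
    G.dist u v = 2 := by
  have h2 := mydiam_two hG hP4 u v
  have h0 : G.dist u v ≠ 0 := fun h => hne (hG.dist_eq_zero_iff.mp h)
  have h1 : G.dist u v ≠ 1 := fun h => hadj (SimpleGraph.dist_eq_one_iff_adj.mp h)
  omega

end AuxLemmas

/-- for a finite connected cograph on `n` vertices without true
twins, `smd(G) = n - ω(G)`. -/
theorem smd_eq_card_sub_cliqueNum {V : Type*} [Fintype V]
    (G : SimpleGraph V) (hG : G.Connected) (hP4 : ¬ HasInducedP4 G)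
    (htt : ∀ u v : V, u ≠ v → ¬ TrueTwins G u v) :
    smd G = Fintype.card V - sSup {n | ∃ s : Finset V, G.IsNClique n s} := by
  classical
  set K : Set ℕ := {n | ∃ s : Finset V, G.IsNClique n s} with hK
  have hKne : K.Nonempty := ⟨0, ∅, by simp⟩
  have hKbdd : BddAbove K := by
    refine ⟨Fintype.card V, fun n hn => ?_⟩
    obtain ⟨s, hs⟩ := hn
    rw [← hs.2]
    simpa using s.card_le_univ
  set ω := sSup K with hω
  obtain ⟨S, hS⟩ : ω ∈ K := Nat.sSup_mem hKne hKbdd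
  have hScard : S.card = ω := hS.2
  -- The complement of the maximum clique S is a strong resolving set.
  have hres : IsStrongResolvingSet G ↑(Sᶜ : Finset V) := by
    intro u v huv
    by_cases hu : u ∈ S
    · by_cases hv : v ∈ S
      · have hadj : G.Adj u v := hS.1 (Finset.mem_coe.mpr hu) (Finset.mem_coe.mpr hv) huv
        have hnt : ¬ Twins G u v := fun h => htt u v huv ⟨h, hadj⟩
        have hex : ∃ w, ¬ (w ∈ G.neighborSet u \ {v} ↔ w ∈ G.neighborSet v \ {u}) := by
          by_contra hcc
          push_neg at hcc
          exact hnt (Set.ext hcc)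
        obtain ⟨w, hw⟩ := hex
        simp only [Set.mem_diff, SimpleGraph.mem_neighborSet, Set.mem_singleton_iff] at hw
        have key : (G.Adj u w ∧ w ≠ v ∧ ¬ G.Adj v w) ∨ (G.Adj v w ∧ w ≠ u ∧ ¬ G.Adj u w) := by
          by_cases h1 : G.Adj u w <;> by_cases h2 : G.Adj v w
          · exact absurd ⟨fun _ => ⟨h2, fun h => G.loopless.irrefl u (h ▸ h1)⟩,
              fun _ => ⟨h1, fun h => G.loopless.irrefl v (h ▸ h2)⟩⟩ hw
          · have hwv : w ≠ v := by
              rintro rfl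
              exact hw ⟨fun h => absurd rfl h.2, fun h => absurd h.1 (G.loopless.irrefl _)⟩
            exact Or.inl ⟨h1, hwv, h2⟩
          · have hwu : w ≠ u := by
              rintro rfl
              exact hw ⟨fun h => absurd h.1 (G.loopless.irrefl _), fun h => absurd rfl h.2⟩
            exact Or.inr ⟨h2, hwu, h1⟩
          · exact absurd ⟨fun h => absurd h.1 h1, fun h => absurd h.1 h2⟩ hw
        have duv : G.dist u v = 1 := SimpleGraph.dist_eq_one_iff_adj.mpr hadj
        have dvu : G.dist v u = 1 := SimpleGraph.dist_eq_one_iff_adj.mpr hadj.symm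
        rcases key with ⟨huw, hwv, hvw⟩ | ⟨hvw, hwu, huw⟩
        · have hwS : w ∉ S := fun hwS =>
            hvw ((hS.1 (Finset.mem_coe.mpr hv) (Finset.mem_coe.mpr hwS) (Ne.symm hwv)))
          refine ⟨w, by simpa using hwS, Or.inr ?_⟩
          have dwu : G.dist w u = 1 := SimpleGraph.dist_eq_one_iff_adj.mpr huw.symm
          have dwv : G.dist w v = 2 :=
            mydist_two hG hP4 hwv (fun h => hvw h.symm)
          omega
        · have hwS : w ∉ S := fun hwS =>
            huw ((hS.1 (Finset.mem_coe.mpr hu) (Finset.mem_coe.mpr hwS) (Ne.symm hwu)))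
          refine ⟨w, by simpa using hwS, Or.inl ?_⟩
          have dwv : G.dist w v = 1 := SimpleGraph.dist_eq_one_iff_adj.mpr hvw.symm
          have dwu : G.dist w u = 2 :=
            mydist_two hG hP4 hwu (fun h => huw h.symm)
          omega
      · refine ⟨v, by simpa using hv, Or.inl ?_⟩
        rw [SimpleGraph.dist_self]
        omega
    · refine ⟨u, by simpa using hu, Or.inr ?_⟩
      rw [SimpleGraph.dist_self]
      omega
  have hmem : (Fintype.card V - ω) ∈
      {n | ∃ R : Finset V, IsStrongResolvingSet G ↑R ∧ R.card = n} := by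
    refine ⟨Sᶜ, hres, ?_⟩
    rw [Finset.card_compl, hScard]
  refine le_antisymm (Nat.sInf_le hmem) ?_
  refine le_csInf ⟨_, hmem⟩ ?_
  rintro m ⟨R, hR, rfl⟩
  -- the complement of R is a clique
  have hcl : G.IsClique ↑(Rᶜ : Finset V) := by
    intro u hu v hv huv
    by_contra hadj
    obtain ⟨w, hwR, hsr⟩ := hR u v huv
    have duv : G.dist u v = 2 := mydist_two hG hP4 huv hadj
    have dvu : G.dist v u = 2 := mydist_two hG hP4 huv.symm (fun h => hadj h.symm)
    rcases hsr with h | h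
    · have : G.dist w u ≤ 2 := mydiam_two hG hP4 w u
      have hwv : G.dist w v = 0 := by omega
      have : w = v := hG.dist_eq_zero_iff.mp hwv
      subst this
      simp only [Finset.mem_coe, Finset.mem_compl] at hv
      exact hv hwR
    · have : G.dist w v ≤ 2 := mydiam_two hG hP4 w v
      have hwu : G.dist w u = 0 := by omega
      have : w = u := hG.dist_eq_zero_iff.mp hwu
      subst this
      simp only [Finset.mem_coe, Finset.mem_compl] at hu
      exact hu hwR
  have hle : (Rᶜ : Finset V).card ≤ ω := le_csSup hKbdd ⟨Rᶜ, hcl, rfl⟩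
  have h1 : (Rᶜ : Finset V).card = Fintype.card V - R.card := Finset.card_compl _
  have h2 : R.card ≤ Fintype.card V := by simpa using R.card_le_univ
  omega
end

section
/- Let G be a finite connected cograph on n vertices. Then smd(G) = n − m, where m is the maximum size of a clique K of G such that no two distinct vertices of K are true twins in G. (This is the theorem smd(G) = n − ω(G') of the paper, since for any graph G' obtained from G by successively deleting one vertex from pairs of true twins until none remain, ω(G') equals this maximum m.) -/
section Aux

open SimpleGraph

variable {V : Type*}

/-- A connected `P4`-free graph has diameter at most `2`. -/
lemma dist_le_two_of_noP4 (G : SimpleGraph V) (hG : G.Connected)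
    (hP4 : ¬ HasInducedP4 G) (u v : V) : G.dist u v ≤ 2 := by
  by_contra hlt
  push_neg at hlt
  obtain ⟨p, hp⟩ := hG.exists_walk_length_eq_dist u v
  match p, hp with
  | .nil, hp => simp [← hp] at hlt
  | .cons h₁ .nil, hp => simp [← hp] at hlt
  | .cons h₁ (.cons h₂ .nil), hp => simp [← hp] at hlt
  | .cons (v := a) h₁ (.cons (v := b) h₂ (.cons (v := c) h₃ q)), hp =>
    simp only [Walk.length_cons] at hp
    -- dist u v = q.length + 3
    have hdist : G.dist u v = q.length + 3 := by omega
    have hub : ¬ G.Adj u b := fun h => by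
      have := G.dist_le (Walk.cons h (Walk.cons h₃ q))
      simp only [Walk.length_cons] at this; omega
    have huc : ¬ G.Adj u c := fun h => by
      have := G.dist_le (Walk.cons h q)
      simp only [Walk.length_cons] at this; omega
    have hac : ¬ G.Adj a c := fun h => by
      have := G.dist_le (Walk.cons h₁ (Walk.cons h q))
      simp only [Walk.length_cons] at this; omega
    have hune_b : u ≠ b := fun h => by
      subst h
      have := G.dist_le (Walk.cons h₃ q)
      simp only [Walk.length_cons] at this; omega
    have hune_c : u ≠ c := fun h => by
      subst h
      have := G.dist_le q
      omega
    have hane_c : a ≠ c := fun h => huc (h ▸ h₁)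
    exact hP4 ⟨u, a, b, c, hune_b, hune_c, hane_c, h₁, h₂, h₃, hub, huc, hac⟩

variable [Fintype V]

/-- The key characterization: `R` is a strong resolving set iff its complement
is a clique without true twins. -/
lemma srs_iff_compl [DecidableEq V] (G : SimpleGraph V) (hG : G.Connected)
    (hP4 : ¬ HasInducedP4 G) (R : Finset V) :
    IsStrongResolvingSet G ↑R ↔
      (G.IsClique ↑Rᶜ ∧ ∀ u ∈ Rᶜ, ∀ w ∈ Rᶜ, u ≠ w → ¬ TrueTwins G u w) := by
  have hd2 : ∀ u v : V, G.dist u v ≤ 2 := dist_le_two_of_noP4 G hG hP4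
  have hone : ∀ {u v : V}, G.Adj u v → G.dist u v = 1 := fun h =>
    SimpleGraph.dist_eq_one_iff_adj.mpr h
  have htwo : ∀ {u v : V}, u ≠ v → ¬ G.Adj u v → G.dist u v = 2 := by
    intro u v hne hna
    have h2 := hd2 u v
    have h0 : G.dist u v ≠ 0 := (hG.pos_dist_of_ne hne).ne'
    have h1 : G.dist u v ≠ 1 := fun e => hna (SimpleGraph.dist_eq_one_iff_adj.mp e)
    omega
  constructor
  · intro h
    constructor
    · intro u hu v hv hne
      simp only [Finset.coe_compl, Set.mem_compl_iff, Finset.mem_coe] at hu hv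
      by_contra hna
      have hduv : G.dist u v = 2 := htwo hne hna
      have hdvu : G.dist v u = 2 := by rw [SimpleGraph.dist_comm]; exact hduv
      obtain ⟨w, hwR, hw⟩ := h u v hne
      rcases hw with hw | hw
      · have h2 := hd2 w u
        rw [hdvu] at hw
        have : G.dist w v = 0 := by omega
        have : w = v := hG.dist_eq_zero_iff.mp this
        exact hv (this ▸ hwR)
      · have h2 := hd2 w v
        rw [hduv] at hw
        have : G.dist w u = 0 := by omega
        have : w = u := hG.dist_eq_zero_iff.mp this
        exact hu (this ▸ hwR)
    · intro u hu v hv hne htt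
      simp only [Finset.mem_compl] at hu hv
      obtain ⟨htw, hadj⟩ := htt
      have hduv : G.dist u v = 1 := hone hadj
      have hdvu : G.dist v u = 1 := by rw [SimpleGraph.dist_comm]; exact hduv
      obtain ⟨w, hwR, hw⟩ := h u v hne
      have hwu : w ≠ u := fun e => hu (e ▸ hwR)
      have hwv : w ≠ v := fun e => hv (e ▸ hwR)
      have hwu0 : G.dist w u ≠ 0 := (hG.pos_dist_of_ne hwu).ne'
      have hwv0 : G.dist w v ≠ 0 := (hG.pos_dist_of_ne hwv).ne'
      have h2u := hd2 w u
      have h2v := hd2 w v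
      rcases hw with hw | hw
      · rw [hdvu] at hw
        have hwv1 : G.dist w v = 1 := by omega
        have hwu2 : G.dist w u = 2 := by omega
        have hadjwv : G.Adj w v := SimpleGraph.dist_eq_one_iff_adj.mp hwv1
        have : w ∈ G.neighborSet v \ {u} := ⟨hadjwv.symm, hwu⟩
        rw [← htw] at this
        have : G.Adj u w := this.1
        have : G.dist w u = 1 := hone this.symm
        omega
      · rw [hduv] at hw
        have hwu1 : G.dist w u = 1 := by omega
        have hwv2 : G.dist w v = 2 := by omega
        have hadjwu : G.Adj w u := SimpleGraph.dist_eq_one_iff_adj.mp hwu1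
        have : w ∈ G.neighborSet u \ {v} := ⟨hadjwu.symm, hwv⟩
        rw [htw] at this
        have : G.Adj v w := this.1
        have : G.dist w v = 1 := hone this.symm
        omega
  · rintro ⟨hcl, htf⟩ u v hne
    by_cases huR : u ∈ R
    · refine ⟨u, huR, Or.inr ?_⟩
      rw [SimpleGraph.dist_self, Nat.zero_add]
    by_cases hvR : v ∈ R
    · refine ⟨v, hvR, Or.inl ?_⟩
      rw [SimpleGraph.dist_self, Nat.zero_add]
    have hu' : u ∈ (↑Rᶜ : Set V) := by simp [huR]
    have hv' : v ∈ (↑Rᶜ : Set V) := by simp [hvR]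
    have hadj : G.Adj u v := hcl hu' hv' hne
    have hntw : ¬ Twins G u v := fun e =>
      htf u (by simpa using huR) v (by simpa using hvR) hne ⟨e, hadj⟩
    unfold Twins at hntw
    rw [Set.ext_iff] at hntw
    push_neg at hntw
    obtain ⟨w, hw⟩ := hntw
    rcases hw with ⟨hA, hB⟩ | ⟨hA, hB⟩
    · obtain ⟨hadjuw, hwv⟩ := hA
      have hadjuw : G.Adj u w := hadjuw
      have hwv : w ≠ v := hwv
      have hwu : w ≠ u := fun e => G.irrefl (e ▸ hadjuw)
      have hnvw : ¬ G.Adj v w := fun h => hB ⟨h, hwu⟩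
      have hwR : w ∈ R := by
        by_contra hwR
        exact hnvw ((hcl (by simp [hwR]) hv' hwv).symm)
      refine ⟨w, hwR, Or.inr ?_⟩
      rw [htwo hwv (fun h => hnvw h.symm), hone hadjuw.symm, hone hadj]
    · obtain ⟨hadjvw, hwu⟩ := hB
      have hadjvw : G.Adj v w := hadjvw
      have hwu : w ≠ u := hwu
      have hwv : w ≠ v := fun e => G.irrefl (e ▸ hadjvw)
      have hnuw : ¬ G.Adj u w := fun h => hA ⟨h, hwv⟩
      have hwR : w ∈ R := by
        by_contra hwR
        exact hnuw ((hcl (by simp [hwR]) hu' hwu).symm)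
      refine ⟨w, hwR, Or.inl ?_⟩
      rw [htwo hwu (fun h => hnuw h.symm), hone hadjvw.symm, hone hadj.symm]

end Aux

/-- for a finite connected cograph on `n` vertices,
`smd(G) = n - m` where `m` is the maximum size of a clique of `G`
containing no pair of true twins of `G`. -/
theorem smd_eq_card_sub_twinlessCliqueNum {V : Type*} [Fintype V]
    (G : SimpleGraph V) (hG : G.Connected) (hP4 : ¬ HasInducedP4 G) :
    smd G = Fintype.card V -
      sSup {n | ∃ s : Finset V, G.IsNClique n s ∧
        ∀ u ∈ s, ∀ w ∈ s, u ≠ w → ¬ TrueTwins G u w} := by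
  classical
  set N := Fintype.card V with hN
  set B : Set ℕ := {n | ∃ s : Finset V, G.IsNClique n s ∧
      ∀ u ∈ s, ∀ w ∈ s, u ≠ w → ¬ TrueTwins G u w} with hBdef
  set A : Set ℕ := {n | ∃ R : Finset V, IsStrongResolvingSet G ↑R ∧ R.card = n} with hAdef
  have hB0 : (0 : ℕ) ∈ B := ⟨∅, by simp, by simp⟩
  have hBbdd : BddAbove B := by
    refine ⟨N, fun k hk => ?_⟩
    obtain ⟨s, hs, -⟩ := hk
    rw [← hs.2]
    simpa [hN] using Finset.card_le_univ s
  have hm : sSup B ∈ B := Nat.sSup_mem ⟨0, hB0⟩ hBbdd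
  obtain ⟨s, hs, htf⟩ := hm
  have hmN : sSup B ≤ N := by
    rw [← hs.2, hN]; exact Finset.card_le_univ s
  have hmem : N - sSup B ∈ A := by
    refine ⟨sᶜ, ?_, ?_⟩
    · rw [srs_iff_compl G hG hP4]
      rw [compl_compl]
      exact ⟨hs.1, htf⟩
    · rw [Finset.card_compl, hs.2]
  have hsmd : smd G = sInf A := rfl
  rw [hsmd]
  refine le_antisymm (Nat.sInf_le hmem) ?_
  refine le_csInf ⟨N - sSup B, hmem⟩ ?_
  rintro n ⟨R, hR, rfl⟩
  rw [srs_iff_compl G hG hP4] at hR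
  have hkB : Rᶜ.card ∈ B := by
    refine ⟨Rᶜ, ⟨hR.1, rfl⟩, fun u hu w hw hne => hR.2 u hu w hw hne⟩
  have hk : Rᶜ.card ≤ sSup B := le_csSup hBbdd hkB
  have hsum : R.card + Rᶜ.card = N := by
    rw [hN]; exact Finset.card_add_card_compl R
  omega
end

section
/- Let G be a finite connected simple graph and u,v distinct twins in G. Then u and v are mutually maximally distant in G (hence {u,v} is an edge of the strong resolving graph G_SR). -/
/-- distinct twins of a finite connected graph are mutually
maximally distant, hence adjacent in the strong resolving graph. -/
theorem twins_mutuallyMaxDist {V : Type*} [Fintype V]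
    (G : SimpleGraph V) (hG : G.Connected) (u v : V) (huv : u ≠ v)
    (h : Twins G u v) :
    MutuallyMaxDist G u v ∧ (strongResolvingGraph G).Adj u v := by
  have key : ∀ a b : V, a ≠ b → Twins G a b → MaxDistTo G a b := by
    intro a b hab htw u' hadj
    have hpos : 1 ≤ G.dist a b := by
      have := (hG.dist_eq_zero_iff (u := a) (v := b)).not.mpr hab
      omega
    by_cases hub : u' = b
    · subst hub; simp [SimpleGraph.dist_self]
    · have hmem : u' ∈ G.neighborSet a \ {b} :=
        ⟨(SimpleGraph.mem_neighborSet G a u').mpr hadj, hub⟩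
      rw [htw] at hmem
      have hadj' : G.Adj b u' := (SimpleGraph.mem_neighborSet G b u').mp hmem.1
      calc G.dist u' b = 1 := by
            rw [SimpleGraph.dist_comm, SimpleGraph.dist_eq_one_iff_adj]; exact hadj'
        _ ≤ G.dist a b := hpos
  have hsym : Twins G v u := by
    unfold Twins at h ⊢; rw [h]
  have hm : MutuallyMaxDist G u v := ⟨key u v huv h, key v u huv.symm hsym⟩
  exact ⟨hm, huv, hm⟩
end

section
/- For every finite strongly connected digraph G, the strong metric dimension of G equals the minimum size of a vertex cover of the strong resolving graph of G, i.e., smd(G) = τ(G_SR). -/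
/-- There is a directed walk of length `n` from `u` to `v` in the digraph with
edge relation `E`. -/
def DWalk {V : Type*} (E : V → V → Prop) (u v : V) (n : ℕ) : Prop :=
  ∃ f : Fin (n + 1) → V, f 0 = u ∧ f (Fin.last n) = v ∧
    ∀ i : Fin n, E (f i.castSucc) (f i.succ)

/-- The length of a shortest directed path from `u` to `v`. -/
noncomputable def ddist {V : Type*} (E : V → V → Prop) (u v : V) : ℕ :=
  sInf {n | DWalk E u v n}

/-- The digraph with edge relation `E` is strongly connected. -/
def StronglyConnected {V : Type*} (E : V → V → Prop) : Prop :=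
  ∀ u v : V, ∃ n : ℕ, DWalk E u v n

/-- `u` is maximally distant to `v` (u MDT v): no in-neighbour of `u` is
farther from `v` than `u` is. -/
def MDT {V : Type*} (E : V → V → Prop) (u v : V) : Prop :=
  ∀ u', E u' u → ddist E u' v ≤ ddist E u v

/-- `v` is maximally distant from `u` (v MDF u): no out-neighbour of `v` is
farther from `u` than `v` is. -/
def MDF {V : Type*} (E : V → V → Prop) (v u : V) : Prop :=
  ∀ v', E v v' → ddist E u v' ≤ ddist E u v

/-- `u` is mutually maximally distant to `v` (u MMDT v). -/
def MMDT {V : Type*} (E : V → V → Prop) (u v : V) : Prop :=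
  MDT E u v ∧ MDF E v u

/-- The strong resolving graph of the digraph with edge relation `E`: an
undirected graph with an edge `{u,v}` iff `u ≠ v` and `u MMDT v` or `v MMDT u`. -/
def dsrGraph {V : Type*} (E : V → V → Prop) : SimpleGraph V where
  Adj u v := u ≠ v ∧ (MMDT E u v ∨ MMDT E v u)
  symm := by
    constructor
    rintro u v ⟨h1, h2⟩
    exact ⟨h1.symm, h2.symm⟩
  loopless := by
    constructor
    rintro u ⟨h, -⟩
    exact h rfl

/-- `w` strongly resolves `u` to `v`: there is a shortest directed path from
`w` to `v` containing `u` or a shortest directed path from `u` to `w`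
containing `v`. -/
def DStronglyResolves {V : Type*} (E : V → V → Prop) (w u v : V) : Prop :=
  ddist E w v = ddist E w u + ddist E u v ∨
  ddist E u w = ddist E u v + ddist E v w

/-- `R` is a strong resolving set for the digraph with edge relation `E`. -/
def IsDStrongResolvingSet {V : Type*} (E : V → V → Prop) (R : Set V) : Prop :=
  ∀ u v : V, u ≠ v → ∃ w ∈ R, DStronglyResolves E w u v

/-- The strong metric dimension of the digraph with edge relation `E`. -/
noncomputable def dsmd {V : Type*} [Fintype V] (E : V → V → Prop) : ℕ :=
  sInf {n | ∃ R : Finset V, IsDStrongResolvingSet E ↑R ∧ R.card = n}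

/-- The join of two digraphs on disjoint vertex sets: keep all edges and add
all edges in both directions between the two graphs. -/
def joinE {V1 V2 : Type*} (E1 : V1 → V1 → Prop) (E2 : V2 → V2 → Prop) :
    V1 ⊕ V2 → V1 ⊕ V2 → Prop
  | Sum.inl a, Sum.inl b => E1 a b
  | Sum.inr a, Sum.inr b => E2 a b
  | Sum.inl _, Sum.inr _ => True
  | Sum.inr _, Sum.inl _ => True

/-- A solitary vertex: some other vertex with no edge to or from it. -/
def SolitaryVertex {V : Type*} (E : V → V → Prop) (u : V) : Prop :=
  ∃ v : V, v ≠ u ∧ ¬ E u v ∧ ¬ E v u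

/-- An in-vertex: some vertex with an edge to `u` but no edge back. -/
def InVertex {V : Type*} (E : V → V → Prop) (u : V) : Prop :=
  ∃ v : V, E v u ∧ ¬ E u v

/-- An out-vertex: some vertex with an edge from `u` but no edge back. -/
def OutVertex {V : Type*} (E : V → V → Prop) (u : V) : Prop :=
  ∃ v : V, E u v ∧ ¬ E v u

/-- An in-out-vertex: both an in-vertex and an out-vertex. -/
def InOutVertex {V : Type*} (E : V → V → Prop) (u : V) : Prop :=
  InVertex E u ∧ OutVertex E u

section Aux

variable {V : Type*} {E : V → V → Prop}

lemma dwalk_refl (E : V → V → Prop) (u : V) : DWalk E u u 0 :=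
  ⟨fun _ => u, rfl, rfl, fun i => i.elim0⟩

lemma DWalk.eq_of_zero {u v : V} (h : DWalk E u v 0) : u = v := by
  obtain ⟨f, h0, hl, -⟩ := h
  rw [← h0, ← hl]; rfl

lemma dwalk_succ_iff {u v : V} {n : ℕ} :
    DWalk E u v (n + 1) ↔ ∃ x, DWalk E u x n ∧ E x v := by
  constructor
  · rintro ⟨f, h0, hl, he⟩
    refine ⟨f (Fin.castSucc (Fin.last n)), ⟨f ∘ Fin.castSucc, ?_, rfl, ?_⟩, ?_⟩
    · simpa using h0
    · intro i
      have := he i.castSucc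
      rw [Fin.succ_castSucc] at this; exact this
    · have := he (Fin.last n)
      simpa [Fin.succ_last, hl] using this
  · rintro ⟨x, ⟨g, h0, hl, he⟩, hxv⟩
    refine ⟨Fin.snoc g v, ?_, ?_, ?_⟩
    · have : (0 : Fin (n + 2)) = Fin.castSucc 0 := rfl
      rw [this, Fin.snoc_castSucc]; exact h0
    · simp
    · intro i
      induction i using Fin.lastCases with
      | last =>
        have h1 : (Fin.snoc g v : Fin (n + 2) → V) (Fin.castSucc (Fin.last n)) = x := by
          rw [Fin.snoc_castSucc, hl]
        have h2 : (Fin.snoc g v : Fin (n + 2) → V) (Fin.succ (Fin.last n)) = v := by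
          rw [Fin.succ_last, Fin.snoc_last]
        rw [h1, h2]; exact hxv
      | cast j =>
        have h1 : (Fin.snoc g v : Fin (n + 2) → V) (Fin.castSucc (Fin.castSucc j)) = g j.castSucc := by
          rw [Fin.snoc_castSucc]
        have h2 : (Fin.snoc g v : Fin (n + 2) → V) (Fin.succ (Fin.castSucc j)) = g j.succ := by
          rw [Fin.succ_castSucc, Fin.snoc_castSucc]
        rw [h1, h2]; exact he j

lemma DWalk.append {u v w : V} {m n : ℕ} (h1 : DWalk E u v m) (h2 : DWalk E v w n) :
    DWalk E u w (m + n) := by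
  induction n generalizing w with
  | zero => rwa [h2.eq_of_zero] at h1
  | succ n ih =>
    obtain ⟨x, hx, hxw⟩ := dwalk_succ_iff.mp h2
    exact dwalk_succ_iff.mpr ⟨x, ih hx, hxw⟩

lemma DWalk.flip {u v : V} {n : ℕ} (h : DWalk E u v n) : DWalk (flip E) v u n := by
  obtain ⟨f, h0, hl, he⟩ := h
  refine ⟨f ∘ Fin.rev, by simp [hl], by simp [h0], fun i => ?_⟩
  have h1 : (Fin.castSucc i).rev = i.rev.succ := Fin.rev_castSucc i
  have h2 : (Fin.succ i).rev = i.rev.castSucc := Fin.rev_succ i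
  simp only [Function.comp_apply, h1, h2]
  exact he i.rev

lemma dwalk_flip_iff {u v : V} {n : ℕ} : DWalk (flip E) u v n ↔ DWalk E v u n :=
  ⟨fun h => h.flip, fun h => h.flip⟩

lemma ddist_flip (u v : V) : ddist (flip E) u v = ddist E v u := by
  unfold ddist
  congr 1
  ext n
  exact dwalk_flip_iff

lemma StronglyConnected.flip (hsc : StronglyConnected E) : StronglyConnected (flip E) :=
  fun u v => (hsc v u).imp fun _ h => h.flip

lemma ddist_le {u v : V} {n : ℕ} (h : DWalk E u v n) : ddist E u v ≤ n :=
  Nat.sInf_le h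

lemma dwalk_ddist (hsc : StronglyConnected E) (u v : V) : DWalk E u v (ddist E u v) :=
  Nat.sInf_mem (hsc u v)

lemma ddist_self (E : V → V → Prop) (u : V) : ddist E u u = 0 :=
  Nat.le_zero.mp (ddist_le (dwalk_refl E u))

lemma eq_of_ddist_eq_zero (hsc : StronglyConnected E) {u v : V}
    (h : ddist E u v = 0) : u = v := by
  have := dwalk_ddist hsc u v
  rw [h] at this
  exact this.eq_of_zero

lemma ddist_triangle (hsc : StronglyConnected E) (u v w : V) :
    ddist E u w ≤ ddist E u v + ddist E v w :=
  ddist_le ((dwalk_ddist hsc u v).append (dwalk_ddist hsc v w))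

lemma ddist_le_one (h : E u v) : ddist E u v ≤ 1 :=
  ddist_le (dwalk_succ_iff.mpr ⟨u, dwalk_refl E u, h⟩)

/-- penultimate vertex of a shortest walk -/
lemma exists_pred (hsc : StronglyConnected E) {w u : V} {m : ℕ}
    (h : ddist E w u = m + 1) : ∃ u', E u' u ∧ ddist E w u' ≤ m := by
  have := dwalk_ddist hsc w u
  rw [h] at this
  obtain ⟨x, hx, hxu⟩ := dwalk_succ_iff.mp this
  exact ⟨x, hxu, ddist_le hx⟩

/-- first vertex of a shortest walk -/
lemma exists_succ (hsc : StronglyConnected E) {v w : V} {m : ℕ}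
    (h : ddist E v w = m + 1) : ∃ v', E v v' ∧ ddist E v' w ≤ m := by
  have h' : ddist (flip E) w v = m + 1 := by rwa [ddist_flip]
  obtain ⟨x, hxv, hwx⟩ := exists_pred hsc.flip h'
  refine ⟨x, hxv, ?_⟩
  rwa [ddist_flip] at hwx

/-- A vertex strongly resolving a mutually maximally distant pair must be one
of the two vertices. -/
lemma resolver_mem (hsc : StronglyConnected E) {u v w : V} (hm : MMDT E u v)
    (hr : DStronglyResolves E w u v) : w = u ∨ w = v := by
  obtain ⟨hmdt, hmdf⟩ := hm
  rcases hr with h | h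
  · left
    by_contra hwu
    have hpos : ddist E w u ≠ 0 := fun h0 => hwu (eq_of_ddist_eq_zero hsc h0)
    obtain ⟨m, hm'⟩ : ∃ m, ddist E w u = m + 1 := ⟨ddist E w u - 1, by omega⟩
    obtain ⟨u', hu'u, hwu'⟩ := exists_pred hsc hm'
    have h1 : ddist E w v ≤ ddist E w u' + ddist E u' v := ddist_triangle hsc _ _ _
    have h2 : ddist E u' v ≤ ddist E u v := hmdt u' hu'u
    omega
  · right
    by_contra hwv
    have hpos : ddist E v w ≠ 0 := fun h0 => hwv ((eq_of_ddist_eq_zero hsc h0).symm)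
    obtain ⟨m, hm'⟩ : ∃ m, ddist E v w = m + 1 := ⟨ddist E v w - 1, by omega⟩
    obtain ⟨v', hvv', hv'w⟩ := exists_succ hsc hm'
    have h1 : ddist E u w ≤ ddist E u v' + ddist E v' w := ddist_triangle hsc _ _ _
    have h2 : ddist E u v' ≤ ddist E u v := hmdf v' hvv'
    omega

/-- From any vertex `u` one can find a vertex maximally distant to `v`
"behind" `u`. -/
lemma exists_mdt_s12 [Fintype V] (hsc : StronglyConnected E) (u v : V) :
    ∃ u₁, MDT E u₁ v ∧ ddist E u₁ v = ddist E u₁ u + ddist E u v := by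
  classical
  set B := Finset.univ.sup (fun x : V => ddist E x v) with hBdef
  have hB : ∀ x : V, ddist E x v ≤ B := fun x => Finset.le_sup (f := fun x : V => ddist E x v) (Finset.mem_univ x)
  have key : ∀ k : ℕ, ∀ x : V, B - ddist E x v ≤ k →
      ddist E x v = ddist E x u + ddist E u v →
      ∃ u₁, MDT E u₁ v ∧ ddist E u₁ v = ddist E u₁ u + ddist E u v := by
    intro k
    induction k with
    | zero =>
      intro x hk hinv
      by_cases hm : MDT E x v
      · exact ⟨x, hm, hinv⟩
      · exfalso
        simp only [MDT, not_forall] at hm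
        obtain ⟨x', hx'x, hgt⟩ := hm
        have h1 : ddist E x' v ≤ ddist E x' x + ddist E x v := ddist_triangle hsc _ _ _
        have h2 : ddist E x' x ≤ 1 := ddist_le_one hx'x
        have h3 := hB x
        have h4 := hB x'
        omega
    | succ k ih =>
      intro x hk hinv
      by_cases hm : MDT E x v
      · exact ⟨x, hm, hinv⟩
      · simp only [MDT, not_forall] at hm
        obtain ⟨x', hx'x, hgt⟩ := hm
        have h1 : ddist E x' v ≤ ddist E x' x + ddist E x v := ddist_triangle hsc _ _ _
        have h2 : ddist E x' x ≤ 1 := ddist_le_one hx'x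
        have h5 : ddist E x' u ≤ ddist E x' x + ddist E x u := ddist_triangle hsc _ _ _
        have h6 : ddist E x' v ≤ ddist E x' u + ddist E u v := ddist_triangle hsc _ _ _
        have h3 := hB x
        have h4 := hB x'
        have hxv' : ddist E x' v = ddist E x v + 1 := by omega
        exact ih x' (by omega) (by omega)
  have hinv0 : ddist E u v = ddist E u u + ddist E u v := by
    rw [ddist_self]; ring
  exact key B u (by omega) hinv0

lemma exists_mdf [Fintype V] (hsc : StronglyConnected E) (u v : V) :
    ∃ v₁, MDF E v₁ u ∧ ddist E u v₁ = ddist E u v + ddist E v v₁ := by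
  obtain ⟨v₁, hmdt, heq⟩ := exists_mdt_s12 (E := flip E) hsc.flip v u
  refine ⟨v₁, ?_, ?_⟩
  · intro v' hv'
    have := hmdt v' hv'
    rwa [ddist_flip, ddist_flip] at this
  · rw [ddist_flip, ddist_flip, ddist_flip] at heq
    omega

lemma resolving_iff_cover [Fintype V] (hsc : StronglyConnected E) (S : Set V) :
    IsDStrongResolvingSet E S ↔ IsVertexCover (dsrGraph E) S := by
  constructor
  · intro hS a b hab
    obtain ⟨hne, hmm | hmm⟩ := hab
    · obtain ⟨w, hwS, hw⟩ := hS a b hne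
      rcases resolver_mem hsc hmm hw with rfl | rfl
      · exact Or.inl hwS
      · exact Or.inr hwS
    · obtain ⟨w, hwS, hw⟩ := hS b a (Ne.symm hne)
      rcases resolver_mem hsc hmm hw with rfl | rfl
      · exact Or.inr hwS
      · exact Or.inl hwS
  · intro hS u v huv
    obtain ⟨u₁, hu₁, he₁⟩ := exists_mdt_s12 hsc u v
    obtain ⟨v₁, hv₁, he₂⟩ := exists_mdf hsc u₁ v
    have hmdt : MDT E u₁ v₁ := by
      intro u' hu'
      have h1 : ddist E u' v₁ ≤ ddist E u' v + ddist E v v₁ := ddist_triangle hsc _ _ _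
      have h2 : ddist E u' v ≤ ddist E u₁ v := hu₁ u' hu'
      omega
    have hdpos : ddist E u v ≠ 0 := fun h0 => huv (eq_of_ddist_eq_zero hsc h0)
    have hne : u₁ ≠ v₁ := by
      intro h
      rw [h] at he₁ he₂
      rw [ddist_self] at he₂
      omega
    rcases hS u₁ v₁ ⟨hne, Or.inl ⟨hmdt, hv₁⟩⟩ with h1 | h2
    · exact ⟨u₁, h1, Or.inl he₁⟩
    · refine ⟨v₁, h2, Or.inr ?_⟩
      have t1 : ddist E u₁ v₁ ≤ ddist E u₁ u + ddist E u v₁ := ddist_triangle hsc _ _ _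
      have t2 : ddist E u v₁ ≤ ddist E u v + ddist E v v₁ := ddist_triangle hsc _ _ _
      omega

end Aux

/-- for every finite strongly connected loopless digraph,
`smd(G) = τ(G_SR)`. -/
theorem dsmd_eq_tau_dsrGraph {V : Type*} [Fintype V] (E : V → V → Prop)
    (hloop : ∀ x : V, ¬ E x x) (hsc : StronglyConnected E) :
    dsmd E = tau (dsrGraph E) := by
  unfold dsmd tau
  congr 1
  ext n
  constructor
  · rintro ⟨R, hR, rfl⟩
    exact ⟨R, (resolving_iff_cover hsc ↑R).mp hR, rfl⟩
  · rintro ⟨C, hC, rfl⟩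
    exact ⟨C, (resolving_iff_cover hsc ↑C).mpr hC, rfl⟩
end

section
/- Let G be a finite strongly connected digraph without loops and let u,v be distinct vertices with (u,v) ∈ E(G) and (v,u) ∉ E(G). If every in-neighbour of u is an in-neighbour of v (N^-(u) ⊆ N^-(v)) and every out-neighbour of v is an out-neighbour of u (N^+(v) ⊆ N^+(u)), then u is mutually maximally distant to v (u MMDT v), and hence {u,v} is an edge of the strong resolving graph G_SR. (This is the key claim in the directed-join case of Lemma 4: after a directed join G_l ≫ G_r, every u ∈ V(G_l) and v ∈ V(G_r) satisfy these hypotheses, so every such pair is adjacent in G_SR.) -/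
lemma dwalk_one {V : Type*} {E : V → V → Prop} {a b : V} (h : E a b) :
    DWalk E a b 1 := by
  refine ⟨![a, b], rfl, rfl, ?_⟩
  intro i
  fin_cases i
  simpa using h

lemma ddist_le_one_s15 {V : Type*} {E : V → V → Prop} {a b : V} (h : E a b) :
    ddist E a b ≤ 1 :=
  Nat.sInf_le (dwalk_one h)

lemma ddist_eq_one {V : Type*} {E : V → V → Prop} {a b : V} (hne : a ≠ b)
    (h : E a b) : ddist E a b = 1 := by
  refine le_antisymm (ddist_le_one_s15 h) ?_
  have hmem : ddist E a b ∈ {n | DWalk E a b n} :=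
    Nat.sInf_mem ⟨1, dwalk_one h⟩
  rcases Nat.eq_zero_or_pos (ddist E a b) with h0 | h1
  · exfalso
    rw [h0] at hmem
    obtain ⟨f, hf0, hfl, -⟩ := hmem
    exact hne (by rw [← hf0, ← hfl]; rfl)
  · exact h1

/-- if `(u,v)` is a one-way edge of a finite strongly connected
loopless digraph and `N⁻(u) ⊆ N⁻(v)` and `N⁺(v) ⊆ N⁺(u)`, then `u MMDT v`
and hence `{u,v}` is an edge of `G_SR`. -/
theorem oneWayEdge_MMDT {V : Type*} [Fintype V] (E : V → V → Prop)
    (hloop : ∀ x : V, ¬ E x x) (hsc : StronglyConnected E)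
    (u v : V) (huv : u ≠ v) (huvE : E u v) (hvuE : ¬ E v u)
    (hin : ∀ x : V, E x u → E x v) (hout : ∀ x : V, E v x → E u x) :
    MMDT E u v ∧ (dsrGraph E).Adj u v := by
  have hd : ddist E u v = 1 := ddist_eq_one huv huvE
  have hmmdt : MMDT E u v := by
    constructor
    · intro u' hu'
      rcases eq_or_ne u' v with rfl | hne
      · exact absurd hu' hvuE
      · rw [hd, ddist_eq_one hne (hin u' hu')]
    · intro v' hv'
      rcases eq_or_ne u v' with rfl | hne
      · exact absurd hv' hvuE
      · rw [hd, ddist_eq_one hne (hout v' hv')]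
  exact ⟨hmmdt, ⟨huv, Or.inl hmmdt⟩⟩
end
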